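/- arXiv:2310.14145 — 3 statements merged into one kernel-verified Lean document; each statement's English description precedes it below -/
import Mathlib

section
/- The group G is self-replicating: for every vertex v ∈ {0,1}* and every g ∈ G there exists h ∈ G fixing the vertex v such that h|_v = g; equivalently, the section homomorphism St_G(v) → G, h ↦ h|_v, from the stabilizer of v in G to G is surjective. -/
namespace BVTree

/-- States of the automaton (generators, their inverses, and the identity). -/
inductive Q : Type
  | e | qa | qb | qc | qd | qa' | qb' | qc' | qd'
  deriving DecidableEq

open Q

/-- Output function of the automaton. -/
def Qout : Q → Bool → Bool
  | qa, x => !x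
  | qa', x => !x
  | _, x => x

/-- Transition function of the automaton. -/
def Qtrans : Q → Bool → Q
  | qa, false => qd
  | qa, true => e
  | qb, false => qa
  | qb, true => qc
  | qc, _ => qa
  | qd, false => e
  | qd, true => qb
  | qa', false => e
  | qa', true => qd'
  | qb', false => qa'
  | qb', true => qc'
  | qc', _ => qa'
  | qd', false => e
  | qd', true => qb'
  | e, _ => e

/-- The state corresponding to the inverse automorphism. -/
def Qinv : Q → Q
  | e => e
  | qa => qa' | qb => qb' | qc => qc' | qd => qd'
  | qa' => qa | qb' => qb | qc' => qc | qd' => qd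

/-- The action of a state on finite binary words. -/
def act : Q → List Bool → List Bool
  | _, [] => []
  | q, x :: w => Qout q x :: act (Qtrans q x) w

lemma act_inv (q : Q) : ∀ w, act (Qinv q) (act q w) = w := by
  intro w
  induction w generalizing q with
  | nil => rfl
  | cons x w ih =>
    have h1 : Qout (Qinv q) (Qout q x) = x := by cases q <;> cases x <;> rfl
    have h2 : Qtrans (Qinv q) (Qout q x) = Qinv (Qtrans q x) := by
      cases q <;> cases x <;> rfl
    simp [act, h1, h2, ih]

/-- The tree automorphism determined by a state of the automaton. -/
def aut (q : Q) : Equiv.Perm (List Bool) where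
  toFun := act q
  invFun := act (Qinv q)
  left_inv := act_inv q
  right_inv := by
    intro w
    have h : Qinv (Qinv q) = q := by cases q <;> rfl
    simpa [h] using act_inv (Qinv q) w

/-- The automorphism `a`: `a(0w) = 1·d(w)`, `a(1w) = 0·w`. -/
def a : Equiv.Perm (List Bool) := aut qa
/-- The automorphism `b`: `b(0w) = 0·a(w)`, `b(1w) = 1·c(w)`. -/
def b : Equiv.Perm (List Bool) := aut qb
/-- The automorphism `c`: `c(0w) = 0·a(w)`, `c(1w) = 1·a(w)`. -/
def c : Equiv.Perm (List Bool) := aut qc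
/-- The automorphism `d`: `d(0w) = 0·w`, `d(1w) = 1·b(w)`. -/
def d : Equiv.Perm (List Bool) := aut qd

/-- The group `G` generated by `a`, `b`, `c`, `d`. -/
def G : Subgroup (Equiv.Perm (List Bool)) := Subgroup.closure {a, b, c, d}


lemma act_e : ∀ w, act e w = w := by
  intro w; induction w with
  | nil => rfl
  | cons x w ih => simp [act, Qout, Qtrans, ih]

lemma aut_coe (q : Q) : ⇑(aut q) = act q := rfl

lemma aut_apply (q : Q) (x : Bool) (w : List Bool) :
    aut q (x :: w) = Qout q x :: act (Qtrans q x) w := rfl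

lemma aut_inv_apply (q : Q) (w : List Bool) : (aut q)⁻¹ w = act (Qinv q) w := rfl

lemma mem_G : ∀ q : Q, aut q ∈ G ∨ q = e
  | e => Or.inr rfl
  | qa => Or.inl (Subgroup.subset_closure (by simp [a]))
  | qb => Or.inl (Subgroup.subset_closure (by simp [a, b]))
  | qc => Or.inl (Subgroup.subset_closure (by simp [a, b, c]))
  | qd => Or.inl (Subgroup.subset_closure (by simp [a, b, c, d]))
  | qa' => Or.inl (by
      have : (aut qa)⁻¹ = aut qa' := by ext w; rfl
      exact this ▸ G.inv_mem (Subgroup.subset_closure (by simp [a])))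
  | qb' => Or.inl (by
      have : (aut qb)⁻¹ = aut qb' := by ext w; rfl
      exact this ▸ G.inv_mem (Subgroup.subset_closure (by simp [a, b])))
  | qc' => Or.inl (by
      have : (aut qc)⁻¹ = aut qc' := by ext w; rfl
      exact this ▸ G.inv_mem (Subgroup.subset_closure (by simp [a, b, c])))
  | qd' => Or.inl (by
      have : (aut qd)⁻¹ = aut qd' := by ext w; rfl
      exact this ▸ G.inv_mem (Subgroup.subset_closure (by simp [a, b, c, d])))

lemma mem_G' (q : Q) (hq : q ≠ e) : aut q ∈ G := (mem_G q).resolve_right hq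

lemma nil_fixed (g : Equiv.Perm (List Bool)) (hg : g ∈ G) : g [] = [] := by
  induction hg using Subgroup.closure_induction with
  | mem x hx =>
    rcases hx with h | h | h | h <;> subst h <;> rfl
  | one => rfl
  | mul x y _ _ hx hy => simp [Equiv.Perm.mul_apply, hy, hx]
  | inv x _ hx => nth_rewrite 1 [← hx]; simp

/-- Level-one self-replication. -/
lemma level_one (x : Bool) (g : Equiv.Perm (List Bool)) (hg : g ∈ G) :
    ∃ h ∈ G, ∀ w : List Bool, h (x :: w) = x :: g w := by
  induction hg using Subgroup.closure_induction with
  | mem s hs =>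
    rcases hs with h | h | h | h <;> subst h <;> cases x
    · -- a at 0 : witness b
      exact ⟨b, mem_G' qb (by simp), fun w => by
        simp [a, b, aut_apply, aut_coe, Qout, Qtrans]⟩
    · -- a at 1 : witness c
      exact ⟨c, mem_G' qc (by simp), fun w => by
        simp [a, c, aut_apply, aut_coe, Qout, Qtrans]⟩
    · -- b at 0 : witness a * d * a⁻¹
      refine ⟨a * d * a⁻¹, G.mul_mem (G.mul_mem (mem_G' qa (by simp)) (mem_G' qd (by simp)))
        (G.inv_mem (mem_G' qa (by simp))), fun w => ?_⟩
      show (aut qa) ((aut qd) ((aut qa)⁻¹ (false :: w))) = false :: (aut qb) w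
      rw [aut_inv_apply]
      show (aut qa) ((aut qd) (act qa' (false :: w))) = false :: act qb w
      simp [act, aut_apply, Qout, Qtrans, Qinv, aut_coe, act_e]
    · -- b at 1 : witness d
      exact ⟨d, mem_G' qd (by simp), fun w => by
        simp [b, d, aut_apply, aut_coe, Qout, Qtrans]⟩
    · -- c at 0 : witness a * b * a⁻¹
      refine ⟨a * b * a⁻¹, G.mul_mem (G.mul_mem (mem_G' qa (by simp)) (mem_G' qb (by simp)))
        (G.inv_mem (mem_G' qa (by simp))), fun w => ?_⟩
      show (aut qa) ((aut qb) ((aut qa)⁻¹ (false :: w))) = false :: (aut qc) w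
      rw [aut_inv_apply]
      show (aut qa) ((aut qb) (act qa' (false :: w))) = false :: act qc w
      simp [act, aut_apply, Qout, Qtrans, Qinv, aut_coe, act_e]
    · -- c at 1 : witness b
      exact ⟨b, mem_G' qb (by simp), fun w => by
        simp [b, c, aut_apply, aut_coe, Qout, Qtrans]⟩
    · -- d at 0 : witness a * a
      refine ⟨a * a, G.mul_mem (mem_G' qa (by simp)) (mem_G' qa (by simp)), fun w => ?_⟩
      show (aut qa) ((aut qa) (false :: w)) = false :: (aut qd) w
      simp [act, aut_apply, Qout, Qtrans, aut_coe, act_e]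
    · -- d at 1 : witness a * a
      refine ⟨a * a, G.mul_mem (mem_G' qa (by simp)) (mem_G' qa (by simp)), fun w => ?_⟩
      show (aut qa) ((aut qa) (true :: w)) = true :: (aut qd) w
      simp [act, aut_apply, Qout, Qtrans, aut_coe, act_e]
  | one => exact ⟨1, G.one_mem, fun w => rfl⟩
  | mul p q hp hq ihp ihq =>
    obtain ⟨h1, h1G, H1⟩ := ihp
    obtain ⟨h2, h2G, H2⟩ := ihq
    exact ⟨h1 * h2, G.mul_mem h1G h2G, fun w => by
      simp [Equiv.Perm.mul_apply, H2, H1]⟩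
  | inv p hp ihp =>
    obtain ⟨h1, h1G, H1⟩ := ihp
    refine ⟨h1⁻¹, G.inv_mem h1G, fun w => ?_⟩
    have := H1 (p⁻¹ w)
    rw [show p (p⁻¹ w) = w from Equiv.apply_symm_apply p w] at this
    calc h1⁻¹ (x :: w) = h1⁻¹ (h1 (x :: p⁻¹ w)) := by rw [this]
    _ = x :: p⁻¹ w := Equiv.symm_apply_apply _ _

/-- `G` is self-replicating: for every vertex `v` and every `g ∈ G` there is
`h ∈ G` fixing `v` whose section at `v` is `g`. -/
theorem self_replicating (v : List Bool) (g : Equiv.Perm (List Bool)) (hg : g ∈ G) :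
    ∃ h ∈ G, h v = v ∧ ∀ w : List Bool, h (v ++ w) = v ++ g w := by
  induction v generalizing g with
  | nil =>
    exact ⟨g, hg, nil_fixed g hg, fun w => by simp⟩
  | cons x v ih =>
    obtain ⟨g1, g1G, hfix, hsec⟩ := ih g hg
    obtain ⟨h, hG, H⟩ := level_one x g1 g1G
    refine ⟨h, hG, ?_, fun w => ?_⟩
    · have := H v
      rw [hfix] at this
      exact this
    · show h (x :: (v ++ w)) = x :: (v ++ g w)
      rw [H, hsec]

end BVTree
end

section
/- The group G is weakly branch: for every vertex v ∈ {0,1}*, the rigid stabilizer Rist_G(v), consisting of all elements of G that fix every word not having v as a prefix, is a nontrivial subgroup of G. -/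
namespace BVTree

open Q

abbrev P' := Equiv.Perm (List Bool)

open scoped commutatorElement

theorem Equiv.Perm.inv_apply_self {α : Type*} (f : _root_.Equiv.Perm α) (x : α) : f⁻¹ (f x) = x :=
  f.symm_apply_apply x

theorem Equiv.Perm.apply_inv_self {α : Type*} (f : _root_.Equiv.Perm α) (x : α) : f (f⁻¹ x) = x :=
  f.apply_symm_apply x

lemma act_e_s7 (w : List Bool) : act Q.e w = w := by
  induction w with
  | nil => rfl
  | cons x w ih => cases x <;> simp [act, Qout, Qtrans, ih]

lemma a_f (w : List Bool) : a (false :: w) = true :: d w := rfl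
lemma a_t (w : List Bool) : a (true :: w) = false :: w := by
  have h : a (true :: w) = false :: act Q.e w := rfl
  rw [h, act_e_s7]
lemma ai_f (w : List Bool) : a⁻¹ (false :: w) = true :: w := by
  have h : a⁻¹ (false :: w) = true :: act Q.e w := rfl
  rw [h, act_e_s7]
lemma ai_t (w : List Bool) : a⁻¹ (true :: w) = false :: d⁻¹ w := rfl
lemma a_nil : a ([] : List Bool) = [] := rfl
lemma ai_nil : a⁻¹ ([] : List Bool) = [] := rfl

/-- `g` has first-level sections `g0` (left) and `g1` (right) with no root swap. -/
def IsSec (g g0 g1 : P') : Prop :=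
  g [] = [] ∧ (∀ w, g (false :: w) = false :: g0 w) ∧ (∀ w, g (true :: w) = true :: g1 w)

lemma isSec_one : IsSec 1 1 1 := ⟨rfl, fun _ => rfl, fun _ => rfl⟩

lemma IsSec.mul {g g0 g1 g' g0' g1' : P'} (h : IsSec g g0 g1) (h' : IsSec g' g0' g1') :
    IsSec (g * g') (g0 * g0') (g1 * g1') := by
  refine ⟨?_, fun w => ?_, fun w => ?_⟩ <;>
    simp [Equiv.Perm.mul_apply, h.1, h.2.1, h.2.2, h'.1, h'.2.1, h'.2.2]

lemma IsSec.inv {g g0 g1 : P'} (h : IsSec g g0 g1) : IsSec g⁻¹ g0⁻¹ g1⁻¹ := by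
  refine ⟨?_, fun w => ?_, fun w => ?_⟩
  · conv_lhs => rw [← h.1]
    exact Equiv.Perm.inv_apply_self _ _
  · have : g (false :: g0⁻¹ w) = false :: w := by rw [h.2.1, Equiv.Perm.apply_inv_self]
    rw [← this, Equiv.Perm.inv_apply_self]
  · have : g (true :: g1⁻¹ w) = true :: w := by rw [h.2.2, Equiv.Perm.apply_inv_self]
    rw [← this, Equiv.Perm.inv_apply_self]

lemma IsSec.pow {g g0 g1 : P'} (h : IsSec g g0 g1) (k : ℕ) :
    IsSec (g ^ k) (g0 ^ k) (g1 ^ k) := by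
  induction k with
  | zero => simpa [pow_zero] using isSec_one
  | succ k ih => rw [pow_succ, pow_succ, pow_succ]; exact ih.mul h

lemma isSec_b : IsSec b a c := ⟨rfl, fun _ => rfl, fun _ => rfl⟩
lemma isSec_c : IsSec c a a := ⟨rfl, fun _ => rfl, fun _ => rfl⟩
lemma isSec_d : IsSec d 1 b := by
  refine ⟨rfl, fun w => ?_, fun _ => rfl⟩
  have h : d (false :: w) = false :: act Q.e w := rfl
  rw [h, act_e_s7]; simp

lemma isSec_aa : IsSec (a * a) d d := by
  refine ⟨rfl, fun w => ?_, fun w => ?_⟩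
  · rw [Equiv.Perm.mul_apply, a_f, a_t]
  · rw [Equiv.Perm.mul_apply, a_t, a_f]

lemma isSec_aconj {g g0 g1 : P'} (h : IsSec g g0 g1) :
    IsSec (a * g * a⁻¹) g1 (d * g0 * d⁻¹) := by
  refine ⟨?_, fun w => ?_, fun w => ?_⟩
  · simp [Equiv.Perm.mul_apply, ai_nil, h.1, a_nil]
  · rw [Equiv.Perm.mul_apply, Equiv.Perm.mul_apply, ai_f, h.2.2, a_t]
  · rw [Equiv.Perm.mul_apply, Equiv.Perm.mul_apply, ai_t, h.2.1, a_f]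
    simp [Equiv.Perm.mul_apply]

lemma isSec_comm {g g0 g1 g' g0' g1' : P'} (h : IsSec g g0 g1) (h' : IsSec g' g0' g1') :
    IsSec ⁅g, g'⁆ ⁅g0, g0'⁆ ⁅g1, g1'⁆ := by
  simpa [commutatorElement_def] using ((h.mul h').mul h.inv).mul h'.inv

lemma isSec_comm_a {g x : P'} (h : IsSec g x x) : IsSec ⁅g, a⁆ 1 ⁅x, d⁆ := by
  have hi := h.inv
  rw [commutatorElement_def]
  refine ⟨?_, fun w => ?_, fun w => ?_⟩
  · simp [Equiv.Perm.mul_apply, ai_nil, hi.1, a_nil, h.1]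
  · simp only [Equiv.Perm.mul_apply, ai_f, hi.2.2, a_t, h.2.1]
    simp [Equiv.Perm.apply_inv_self]
  · simp only [Equiv.Perm.mul_apply, ai_t, hi.2.1, a_f, h.2.2]
    simp [commutatorElement_def, Equiv.Perm.mul_apply]

-- membership of generators
lemma aG : a ∈ G := Subgroup.subset_closure (by simp)
lemma bG : b ∈ G := Subgroup.subset_closure (by simp)
lemma cG : c ∈ G := Subgroup.subset_closure (by simp)
lemma dG : d ∈ G := Subgroup.subset_closure (by simp)

/-- The base family of elements. -/
def Tset : Set P' :=
  {t | ∃ k : ℕ, t = ⁅c ^ k, a⁆ ∨ t = ⁅b ^ k, c⁆ ∨ t = ⁅d ^ k, b⁆ ∨ t = ⁅a ^ (2 * k), d⁆}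

def S : Set P' := {x | ∃ h ∈ G, ∃ t ∈ Tset, x = h * t * h⁻¹}

def K : Subgroup P' := Subgroup.closure S

lemma TsetG {t : P'} (ht : t ∈ Tset) : t ∈ G := by
  obtain ⟨k, h⟩ := ht
  rcases h with h | h | h | h <;> subst h <;>
    exact mul_mem (mul_mem (mul_mem (pow_mem (by first | exact cG | exact bG | exact dG | exact aG) _)
      (by first | exact aG | exact cG | exact bG | exact dG))
      (inv_mem (pow_mem (by first | exact cG | exact bG | exact dG | exact aG) _)))
      (inv_mem (by first | exact aG | exact cG | exact bG | exact dG))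

lemma KG : K ≤ G := by
  rw [K, Subgroup.closure_le]
  rintro x ⟨h, hG, t, ht, rfl⟩
  exact mul_mem (mul_mem hG (TsetG ht)) (inv_mem hG)

lemma Kconj {g y : P'} (hg : g ∈ G) (hy : y ∈ K) : g * y * g⁻¹ ∈ K := by
  refine Subgroup.closure_induction (p := fun y _ => g * y * g⁻¹ ∈ K) ?_ ?_ ?_ ?_ hy
  · rintro x ⟨h, hG, t, ht, rfl⟩
    exact Subgroup.subset_closure ⟨g * h, mul_mem hg hG, t, ht, by group⟩
  · show g * 1 * g⁻¹ ∈ K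
    have h1 : g * 1 * g⁻¹ = (1 : P') := by group
    rw [h1]; exact one_mem K
  · intro x y _ _ hgx hgy
    show g * (x * y) * g⁻¹ ∈ K
    have h1 : g * (x * y) * g⁻¹ = (g * x * g⁻¹) * (g * y * g⁻¹) := by group
    rw [h1]; exact mul_mem hgx hgy
  · intro x _ hgx
    show g * x⁻¹ * g⁻¹ ∈ K
    have h1 : g * x⁻¹ * g⁻¹ = (g * x * g⁻¹)⁻¹ := by group
    rw [h1]; exact inv_mem hgx

/-- `y` acts as `x` on the subtree at the one-letter vertex `s` and trivially elsewhere. -/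
def Sec (s : Bool) (y x : P') : Prop :=
  y [] = [] ∧ (∀ w, y (s :: w) = s :: x w) ∧ (∀ w, y ((!s) :: w) = (!s) :: w)

lemma sec_of_isSec_true {y t : P'} (h : IsSec y 1 t) : Sec true y t :=
  ⟨h.1, h.2.2, fun w => by simpa using h.2.1 w⟩

lemma sec_of_isSec_false {y t : P'} (h : IsSec y t 1) : Sec false y t :=
  ⟨h.1, h.2.1, fun w => by simpa using h.2.2 w⟩

lemma sec_one (s : Bool) : Sec s 1 1 := ⟨rfl, fun _ => by simp, fun _ => rfl⟩

lemma Sec.mul {s : Bool} {y x y' x' : P'} (h : Sec s y x) (h' : Sec s y' x') :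
    Sec s (y * y') (x * x') := by
  refine ⟨?_, fun w => ?_, fun w => ?_⟩ <;>
    simp [Equiv.Perm.mul_apply, h.1, h.2.1, h.2.2, h'.1, h'.2.1, h'.2.2]

lemma Sec.inv {s : Bool} {y x : P'} (h : Sec s y x) : Sec s y⁻¹ x⁻¹ := by
  refine ⟨?_, fun w => ?_, fun w => ?_⟩
  · conv_lhs => rw [← h.1]
    exact Equiv.Perm.inv_apply_self _ _
  · have : y (s :: x⁻¹ w) = s :: w := by rw [h.2.1, Equiv.Perm.apply_inv_self]
    rw [← this, Equiv.Perm.inv_apply_self]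
  · have : y ((!s) :: w) = (!s) :: w := h.2.2 w
    rw [← this, Equiv.Perm.inv_apply_self, this]

/-- `H` lifts `h`: it acts as `h` on the subtree at `s` and preserves the other subtree. -/
def Lft (s : Bool) (H h : P') : Prop :=
  H [] = [] ∧ (∀ w, H (s :: w) = s :: h w) ∧ (∀ w, ∃ u, H ((!s) :: w) = (!s) :: u)

lemma Lft.inv {s : Bool} {H h : P'} (hH : Lft s H h) : Lft s H⁻¹ h⁻¹ := by
  refine ⟨?_, fun w => ?_, fun w => ?_⟩
  · conv_lhs => rw [← hH.1]
    exact Equiv.Perm.inv_apply_self _ _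
  · have : H (s :: h⁻¹ w) = s :: w := by rw [hH.2.1, Equiv.Perm.apply_inv_self]
    rw [← this, Equiv.Perm.inv_apply_self]
  · have happ : H (H⁻¹ ((!s) :: w)) = (!s) :: w := Equiv.Perm.apply_inv_self H _
    rcases e : H⁻¹ ((!s) :: w) with _ | ⟨x, u⟩
    · rw [e, hH.1] at happ; exact absurd happ (by simp)
    · by_cases hx : x = s
      · exfalso
        rw [hx] at e
        rw [e, hH.2.1] at happ
        cases s <;> simp_all
      · have hx2 : x = !s := by cases s <;> cases x <;> simp_all
        exact ⟨u, by rw [hx2]⟩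

lemma lft_of_isSec_true {H h0 h1 : P'} (hh : IsSec H h0 h1) : Lft true H h1 :=
  ⟨hh.1, hh.2.2, fun w => ⟨h0 w, hh.2.1 w⟩⟩

lemma lft_of_isSec_false {H h0 h1 : P'} (hh : IsSec H h0 h1) : Lft false H h0 :=
  ⟨hh.1, hh.2.1, fun w => ⟨h1 w, hh.2.2 w⟩⟩

lemma lift (s : Bool) {h : P'} (hh : h ∈ G) : ∃ H ∈ G, Lft s H h := by
  refine Subgroup.closure_induction (p := fun h _ => ∃ H ∈ G, Lft s H h) ?_ ?_ ?_ ?_ hh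
  · intro x hx
    rcases s with _ | _
    · -- s = false : left sections
      rcases hx with rfl | rfl | rfl | rfl
      · exact ⟨b, bG, lft_of_isSec_false isSec_b⟩
      · exact ⟨a * d * a⁻¹, mul_mem (mul_mem aG dG) (inv_mem aG),
          lft_of_isSec_false (isSec_aconj isSec_d)⟩
      · exact ⟨a * b * a⁻¹, mul_mem (mul_mem aG bG) (inv_mem aG),
          lft_of_isSec_false (isSec_aconj isSec_b)⟩
      · exact ⟨a * a, mul_mem aG aG, lft_of_isSec_false isSec_aa⟩
    · -- s = true : right sections
      rcases hx with rfl | rfl | rfl | rfl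
      · exact ⟨c, cG, lft_of_isSec_true isSec_c⟩
      · exact ⟨d, dG, lft_of_isSec_true isSec_d⟩
      · exact ⟨b, bG, lft_of_isSec_true isSec_b⟩
      · exact ⟨a * a, mul_mem aG aG, lft_of_isSec_true isSec_aa⟩
  · exact ⟨1, one_mem G, ⟨rfl, fun w => by simp, fun w => ⟨w, by simp⟩⟩⟩
  · rintro x y _ _ ⟨X, XG, hX⟩ ⟨Y, YG, hY⟩
    refine ⟨X * Y, mul_mem XG YG, ⟨?_, fun w => ?_, fun w => ?_⟩⟩
    · simp [Equiv.Perm.mul_apply, hY.1, hX.1]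
    · rw [Equiv.Perm.mul_apply, hY.2.1, hX.2.1, Equiv.Perm.mul_apply]
    · obtain ⟨u, hu⟩ := hY.2.2 w
      obtain ⟨u', hu'⟩ := hX.2.2 u
      exact ⟨u', by rw [Equiv.Perm.mul_apply, hu, hu']⟩
  · rintro x _ ⟨X, XG, hX⟩
    exact ⟨X⁻¹, inv_mem XG, hX.inv⟩

lemma comm_pow_self (g : P') (k : ℕ) : ⁅g ^ k, g⁆ = 1 := by
  rw [commutatorElement_def]
  group

lemma secY {t : P'} (ht : t ∈ Tset) (s : Bool) : ∃ y ∈ K, Sec s y t := by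
  -- first produce Y with IsSec Y 1 t and Y ∈ Tset
  have main : ∃ Y ∈ Tset, IsSec Y 1 t := by
    obtain ⟨k, h⟩ := ht
    rcases h with rfl | rfl | rfl | rfl
    · refine ⟨⁅b ^ k, c⁆, ⟨k, Or.inr (Or.inl rfl)⟩, ?_⟩
      have h1 := isSec_comm (isSec_b.pow k) isSec_c
      rwa [comm_pow_self] at h1
    · refine ⟨⁅d ^ k, b⁆, ⟨k, Or.inr (Or.inr (Or.inl rfl))⟩, ?_⟩
      have h1 := isSec_comm (isSec_d.pow k) isSec_b
      have h2 : ⁅(1 : P'), a⁆ = 1 := by rw [commutatorElement_def]; group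
      rwa [one_pow, h2] at h1
    · refine ⟨⁅a ^ (2 * k), d⁆, ⟨k, Or.inr (Or.inr (Or.inr rfl))⟩, ?_⟩
      have haa : IsSec (a ^ (2 * k)) (d ^ k) (d ^ k) := by
        have h0 : a ^ (2 * k) = (a * a) ^ k := by
          rw [pow_mul, pow_two]
        rw [h0]; exact isSec_aa.pow k
      have h1 := isSec_comm haa isSec_d
      have h2 : ⁅d ^ k, (1 : P')⁆ = 1 := by rw [commutatorElement_def]; group
      rwa [h2] at h1
    · refine ⟨⁅c ^ (2 * k), a⁆, ⟨2 * k, Or.inl rfl⟩, ?_⟩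
      exact isSec_comm_a (isSec_c.pow (2 * k))
  obtain ⟨Y, hYT, hY⟩ := main
  rcases s with _ | _
  · -- s = false : use a * Y * a⁻¹
    refine ⟨a * Y * a⁻¹, Subgroup.subset_closure ⟨a, aG, Y, hYT, rfl⟩, ?_⟩
    have h1 := isSec_aconj hY
    have h2 : d * (1 : P') * d⁻¹ = 1 := by group
    rw [h2] at h1
    exact sec_of_isSec_false h1
  · exact ⟨Y, Subgroup.subset_closure ⟨1, one_mem G, Y, hYT, by group⟩,
      sec_of_isSec_true hY⟩

lemma sec_conj {s : Bool} {H h Y t : P'} (hH : Lft s H h) (hY : Sec s Y t) :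
    Sec s (H * Y * H⁻¹) (h * t * h⁻¹) := by
  have hHi := hH.inv
  refine ⟨?_, fun w => ?_, fun w => ?_⟩
  · simp [Equiv.Perm.mul_apply, hHi.1, hY.1, hH.1]
  · rw [Equiv.Perm.mul_apply, Equiv.Perm.mul_apply, hHi.2.1, hY.2.1, hH.2.1]
    simp [Equiv.Perm.mul_apply]
  · obtain ⟨u, hu⟩ := hHi.2.2 w
    rw [Equiv.Perm.mul_apply, Equiv.Perm.mul_apply, hu, hY.2.2, ← hu,
      Equiv.Perm.apply_inv_self]

lemma secK {x : P'} (hx : x ∈ K) (s : Bool) : ∃ y ∈ K, Sec s y x := by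
  refine Subgroup.closure_induction (p := fun x _ => ∀ s, ∃ y ∈ K, Sec s y x) ?_ ?_ ?_ ?_ hx s
  · rintro x ⟨h, hG, t, ht, rfl⟩ s
    obtain ⟨H, HG, hH⟩ := lift s hG
    obtain ⟨Y, YK, hY⟩ := secY ht s
    exact ⟨H * Y * H⁻¹, Kconj HG YK, sec_conj hH hY⟩
  · intro s; exact ⟨1, one_mem K, sec_one s⟩
  · rintro x y _ _ hx hy s
    obtain ⟨Y, YK, hY⟩ := hx s
    obtain ⟨Y', YK', hY'⟩ := hy s
    exact ⟨Y * Y', mul_mem YK YK', hY.mul hY'⟩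
  · rintro x _ hx s
    obtain ⟨Y, YK, hY⟩ := hx s
    exact ⟨Y⁻¹, inv_mem YK, hY.inv⟩

/-- `g` acts as `x` on the subtree at `v` and trivially elsewhere. -/
def Real (g : P') (v : List Bool) (x : P') : Prop :=
  (∀ u, ¬ v <+: u → g u = u) ∧ (∀ w, g (v ++ w) = v ++ x w)

lemma real_step {g : P'} {v : List Bool} {y x : P'} {s : Bool}
    (hg : Real g v y) (hs : Sec s y x) : Real g (v ++ [s]) x := by
  constructor
  · intro u hnp
    by_cases hv : v <+: u
    · obtain ⟨u', rfl⟩ := hv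
      match u' with
      | [] =>
        have h2 := hg.2 []
        rwa [hs.1] at h2
      | s' :: w =>
        by_cases hss : s' = s
        · subst hss
          exact absurd ⟨w, by simp⟩ hnp
        · have hs' : s' = !s := by cases s <;> cases s' <;> simp_all
          subst hs'
          have h2 := hg.2 ((!s) :: w)
          rwa [hs.2.2] at h2
    · exact hg.1 u hv
  · intro w
    have h0 : (v ++ [s]) ++ w = v ++ (s :: w) := by simp
    have h1 : (v ++ [s]) ++ x w = v ++ (s :: x w) := by simp
    rw [h0, hg.2, hs.2.1, h1]

lemma ML (v : List Bool) : ∀ x ∈ K, ∃ g ∈ G, Real g v x := by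
  induction v using List.reverseRecOn with
  | nil =>
    intro x hx
    refine ⟨x, KG hx, fun u hu => absurd List.nil_prefix hu, fun w => by simp⟩
  | append_singleton v s IH =>
    intro x hx
    obtain ⟨y, yK, hsec⟩ := secK hx s
    obtain ⟨g, gG, hr⟩ := IH y yK
    exact ⟨g, gG, real_step hr hsec⟩

lemma t0K : ⁅c, a⁆ ∈ K :=
  Subgroup.subset_closure ⟨1, one_mem G, ⁅c, a⁆, ⟨1, Or.inl (by rw [pow_one])⟩, by group⟩

lemma t0_moves : (⁅c, a⁆ : P') [true, false, false, false] = [true, false, false, true] := rfl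


/-- `G` is weakly branch: every rigid stabilizer `Rist_G(v)` is nontrivial. -/
theorem weakly_branch (v : List Bool) :
    ∃ g ∈ G, g ≠ 1 ∧ ∀ u : List Bool, ¬ (v <+: u) → g u = u := by
  obtain ⟨g, gG, hr⟩ := ML v ⁅c, a⁆ t0K
  refine ⟨g, gG, ?_, hr.1⟩
  intro h1
  have h2 := hr.2 [true, false, false, false]
  rw [h1, t0_moves] at h2
  simp at h2


end BVTree
end

section
/- For every n ≥ 1, the element a^{2^n} belongs to Stab_G(3n) but not to Stab_G(3n+1); that is, a^{2^n} fixes every word of length 3n but moves some word of length 3n+1. -/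
namespace BVTree

open Q

lemma act_e_eq (w : List Bool) : act e w = w := by
  induction w with
  | nil => rfl
  | cons x t ih => simp [act, Qout, Qtrans, ih]

lemma iter_nil (q : Q) (k : ℕ) : (act q)^[k] [] = [] := by
  induction k with
  | zero => rfl
  | succ k ih => rw [Function.iterate_succ_apply]; simpa [act] using ih

lemma iterD_false (k : ℕ) (w : List Bool) :
    (act qd)^[k] (false :: w) = false :: w := by
  induction k with
  | zero => rfl
  | succ k ih =>
    rw [Function.iterate_succ_apply]
    simpa [act, Qout, Qtrans, act_e_eq] using ih

lemma iterD_true (k : ℕ) (w : List Bool) :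
    (act qd)^[k] (true :: w) = true :: (act qb)^[k] w := by
  induction k generalizing w with
  | zero => rfl
  | succ k ih =>
    rw [Function.iterate_succ_apply, Function.iterate_succ_apply]
    simpa [act, Qout, Qtrans] using ih (act qb w)

lemma iterB_false (k : ℕ) (w : List Bool) :
    (act qb)^[k] (false :: w) = false :: (act qa)^[k] w := by
  induction k generalizing w with
  | zero => rfl
  | succ k ih =>
    rw [Function.iterate_succ_apply, Function.iterate_succ_apply]
    simpa [act, Qout, Qtrans] using ih (act qa w)

lemma iterB_true (k : ℕ) (w : List Bool) :
    (act qb)^[k] (true :: w) = true :: (act qc)^[k] w := by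
  induction k generalizing w with
  | zero => rfl
  | succ k ih =>
    rw [Function.iterate_succ_apply, Function.iterate_succ_apply]
    simpa [act, Qout, Qtrans] using ih (act qc w)

lemma iterC (k : ℕ) (x : Bool) (w : List Bool) :
    (act qc)^[k] (x :: w) = x :: (act qa)^[k] w := by
  induction k generalizing w with
  | zero => rfl
  | succ k ih =>
    rw [Function.iterate_succ_apply, Function.iterate_succ_apply]
    cases x <;> simpa [act, Qout, Qtrans] using ih (act qa w)

lemma iterA_two (x : Bool) (w : List Bool) :
    (act qa)^[2] (x :: w) = x :: act qd w := by
  cases x <;> simp [act, Qout, Qtrans, act_e_eq]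

lemma iterA2 (k : ℕ) (x : Bool) (w : List Bool) :
    (act qa)^[2 * k] (x :: w) = x :: (act qd)^[k] w := by
  induction k generalizing w with
  | zero => rfl
  | succ k ih =>
    have h : 2 * (k + 1) = 2 * k + 2 := by ring
    rw [h, Function.iterate_add_apply, iterA_two, ih,
      Function.iterate_succ_apply]

lemma fix_lemma : ∀ n : ℕ, ∀ v : List Bool, v.length ≤ 3 * n →
    (act qa)^[2 ^ n] v = v := by
  intro n
  induction n with
  | zero =>
    intro v hv
    have : v = [] := List.length_eq_zero_iff.mp (by omega)
    subst this; rfl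
  | succ n ih =>
    intro v hv
    have hp : 2 ^ (n + 1) = 2 * 2 ^ n := by ring
    rw [hp]
    match v, hv with
    | [], _ => exact iter_nil _ _
    | x1 :: t1, hv =>
      rw [iterA2]
      match t1, hv with
      | [], _ => rw [iter_nil]
      | false :: t2, _ => rw [iterD_false]
      | true :: t2, hv =>
        rw [iterD_true]
        match t2, hv with
        | [], _ => rw [iter_nil]
        | false :: t3, hv =>
          rw [iterB_false, ih t3 (by simp at hv; omega)]
        | true :: t3, hv =>
          rw [iterB_true]
          match t3, hv with
          | [], _ => rw [iter_nil]
          | x :: t4, hv =>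
            rw [iterC, ih t4 (by simp at hv; omega)]

/-- The witness word `(010)^n 0`. -/
def vw : ℕ → List Bool
  | 0 => [false]
  | n + 1 => false :: true :: false :: vw n

lemma vw_length (n : ℕ) : (vw n).length = 3 * n + 1 := by
  induction n with
  | zero => rfl
  | succ n ih => simp [vw, ih]; ring

lemma step_lemma (k : ℕ) (w : List Bool) :
    (act qa)^[2 * k] (false :: true :: false :: w) =
      false :: true :: false :: (act qa)^[k] w := by
  rw [iterA2, iterD_true, iterB_false]

lemma move_lemma : ∀ n : ℕ, 1 ≤ n → (act qa)^[2 ^ n] (vw n) ≠ vw n := by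
  intro n
  induction n with
  | zero => omega
  | succ m ih =>
    intro _
    have hp : 2 ^ (m + 1) = 2 * 2 ^ m := by ring
    rw [hp, show vw (m + 1) = false :: true :: false :: vw m from rfl,
      step_lemma]
    cases m with
    | zero =>
      have : (act qa)^[2 ^ 0] (vw 0) = [true] := by decide
      rw [this]; decide
    | succ m' =>
      have h := ih (by omega)
      simp only [ne_eq, List.cons.injEq, true_and]
      exact h

/-- for `n ≥ 1`, `a^{2^n}` fixes level `3n` but moves some word of
length `3n+1`. -/
theorem a_pow_level_stabilizer (n : ℕ) (hn : 1 ≤ n) :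
    (∀ v : List Bool, v.length = 3 * n → (a ^ (2 ^ n)) v = v) ∧
    (∃ v : List Bool, v.length = 3 * n + 1 ∧ (a ^ (2 ^ n)) v ≠ v) := by
  have key : ∀ v : List Bool, (a ^ (2 ^ n)) v = (act qa)^[2 ^ n] v := by
    intro v
    rw [← Equiv.Perm.iterate_eq_pow]
    rfl
  constructor
  · intro v hv
    rw [key]
    exact fix_lemma n v (le_of_eq hv)
  · exact ⟨vw n, vw_length n, by rw [key]; exact move_lemma n hn⟩

end BVTree
end
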